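/- The channel-gain density integrates to one: ∫_0^{A0} f_h(t) dt = 1; i.e., f_h is a probability density on (0, A0]. -/

import Mathlib

open Real MeasureTheory

noncomputable def gainTerm (A0 ν k : ℝ) (n : ℕ) (t : ℝ) : ℝ :=
  (k / A0 ^ k) * Real.exp (-ν) * t ^ (k - 1) *
    ((ν * k * Real.log (A0 / t)) ^ n / ((n.factorial : ℝ)) ^ 2)

lemma gain_img {A0 : ℝ} (hA0 : 0 < A0) :
    Set.Ioc (0:ℝ) A0 = (fun u : ℝ => A0 * Real.exp (-u)) '' Set.Ici 0 := by
  ext x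
  constructor
  · rintro ⟨hx0, hxA⟩
    refine ⟨Real.log (A0 / x), Real.log_nonneg ((one_le_div hx0).mpr hxA), ?_⟩
    simp only
    rw [Real.exp_neg, Real.exp_log (div_pos hA0 hx0)]
    field_simp
  · rintro ⟨u, hu, rfl⟩
    refine ⟨by positivity, ?_⟩
    have h1 : Real.exp (-u) ≤ 1 := Real.exp_le_one_iff.mpr (neg_nonpos.mpr hu)
    calc A0 * Real.exp (-u) ≤ A0 * 1 := by gcongr
      _ = A0 := mul_one A0

lemma gain_deriv (A0 : ℝ) : ∀ u ∈ Set.Ici (0:ℝ),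
    HasDerivWithinAt (fun u : ℝ => A0 * Real.exp (-u)) (-(A0 * Real.exp (-u))) (Set.Ici 0) u := by
  intro u _
  have h1 : HasDerivAt (fun u : ℝ => A0 * Real.exp (-u)) (A0 * (Real.exp (-u) * -1)) u :=
    ((hasDerivAt_neg u).exp).const_mul A0
  have h2 : A0 * (Real.exp (-u) * -1) = -(A0 * Real.exp (-u)) := by ring
  exact (h2 ▸ h1).hasDerivWithinAt

lemma gain_inj {A0 : ℝ} (hA0 : 0 < A0) :
    Set.InjOn (fun u : ℝ => A0 * Real.exp (-u)) (Set.Ici 0) := by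
  intro a _ b _ h
  simp only at h
  have h2 := Real.exp_injective (mul_left_cancel₀ hA0.ne' h)
  exact neg_injective h2

lemma gain_fun {A0 : ℝ} (hA0 : 0 < A0) (ν k : ℝ) (n : ℕ) (u : ℝ) :
    |-(A0 * Real.exp (-u))| • gainTerm A0 ν k n (A0 * Real.exp (-u)) =
      (k * Real.exp (-ν) * ((ν * k) ^ n / ((n.factorial : ℝ)) ^ 2)) *
        (u ^ n * Real.exp (-(k * u))) := by
  have hA0k : (0:ℝ) < A0 ^ k := Real.rpow_pos_of_pos hA0 k
  have habs : |-(A0 * Real.exp (-u))| = A0 * Real.exp (-u) := by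
    rw [abs_neg, abs_of_pos (by positivity)]
  have hlog : Real.log (A0 / (A0 * Real.exp (-u))) = u := by
    rw [div_mul_eq_div_div, div_self hA0.ne', one_div, Real.log_inv, Real.log_exp, neg_neg]
  have hpow : (A0 * Real.exp (-u)) ^ (k - 1) = A0 ^ (k - 1) * Real.exp (-((k-1) * u)) := by
    rw [Real.mul_rpow hA0.le (Real.exp_pos _).le,
      Real.rpow_def_of_pos (Real.exp_pos _), Real.log_exp]
    congr 2
    ring
  have hAA : A0 * A0 ^ (k - 1) = A0 ^ k := by
    rw [show A0 * A0 ^ (k - 1) = A0 ^ (1:ℝ) * A0 ^ (k - 1) by rw [Real.rpow_one],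
      ← Real.rpow_add hA0]
    norm_num
  have hexp : Real.exp (-u) * Real.exp (-((k-1) * u)) = Real.exp (-(k * u)) := by
    rw [← Real.exp_add]; congr 1; ring
  rw [smul_eq_mul, gainTerm, habs, hlog, hpow]
  have e1 : A0 * Real.exp (-u) * (k / A0 ^ k * Real.exp (-ν) *
        (A0 ^ (k - 1) * Real.exp (-((k - 1) * u))) *
        ((ν * k * u) ^ n / ((n.factorial : ℝ)) ^ 2)) =
      ((A0 * A0 ^ (k - 1)) / A0 ^ k) * (Real.exp (-u) * Real.exp (-((k-1) * u))) *
        (k * Real.exp (-ν) * ((ν * k) ^ n / ((n.factorial : ℝ)) ^ 2) * u ^ n) := by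
    rw [mul_pow]
    ring
  rw [e1, hAA, div_self hA0k.ne', hexp, one_mul]
  ring

lemma gain_nonneg {A0 ν k : ℝ} (hA0 : 0 < A0) (hν : 0 ≤ ν) (hk : 0 ≤ k) (n : ℕ) :
    ∀ t ∈ Set.Ioc (0:ℝ) A0, 0 ≤ gainTerm A0 ν k n t := by
  rintro t ⟨ht0, htA⟩
  have hl : 0 ≤ Real.log (A0 / t) := Real.log_nonneg ((one_le_div ht0).mpr htA)
  have h1 : (0:ℝ) ≤ t ^ (k - 1) := Real.rpow_nonneg ht0.le _
  unfold gainTerm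
  positivity

lemma gain_integrableOn {A0 ν k : ℝ} (hA0 : 0 < A0) (hk : 0 < k) (n : ℕ) :
    IntegrableOn (gainTerm A0 ν k n) (Set.Ioc (0:ℝ) A0) := by
  rw [gain_img hA0,
    integrableOn_image_iff_integrableOn_abs_deriv_smul measurableSet_Ici (gain_deriv A0)
      (gain_inj hA0) _]
  have hn1 : (-1:ℝ) < (n:ℝ) := lt_of_lt_of_le neg_one_lt_zero (Nat.cast_nonneg n)
  have hbase : IntegrableOn (fun u : ℝ => u ^ n * Real.exp (-(k * u))) (Set.Ici 0) := by
    rw [integrableOn_Ici_iff_integrableOn_Ioi]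
    have h0 : IntegrableOn (fun u : ℝ => u ^ ((n:ℝ)) * Real.exp (-k * u ^ (1:ℝ)))
        (Set.Ioi (0:ℝ)) := integrableOn_rpow_mul_exp_neg_mul_rpow hn1 one_pos hk
    exact h0.congr_fun
      (fun u hu => by simp only; rw [Real.rpow_natCast, Real.rpow_one, neg_mul]) measurableSet_Ioi
  have h2 := hbase.const_mul (k * Real.exp (-ν) * ((ν * k) ^ n / ((n.factorial : ℝ)) ^ 2))
  exact MeasureTheory.IntegrableOn.congr_fun h2 (fun u _ => (gain_fun hA0 ν k n u).symm)
    measurableSet_Ici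

lemma gain_integral {A0 ν k : ℝ} (hA0 : 0 < A0) (hk : 0 < k) (n : ℕ) :
    ∫ t in Set.Ioc (0:ℝ) A0, gainTerm A0 ν k n t
      = Real.exp (-ν) * ν ^ n / (n.factorial : ℝ) := by
  have hn1 : (-1:ℝ) < (n:ℝ) := lt_of_lt_of_le neg_one_lt_zero (Nat.cast_nonneg n)
  have hcg : ∫ u in Set.Ici (0:ℝ),
        |-(A0 * Real.exp (-u))| • gainTerm A0 ν k n (A0 * Real.exp (-u))
      = ∫ u in Set.Ici (0:ℝ), (k * Real.exp (-ν) * ((ν * k) ^ n / ((n.factorial : ℝ)) ^ 2)) *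
          (u ^ n * Real.exp (-(k * u))) :=
    setIntegral_congr_fun measurableSet_Ici fun u _ => gain_fun hA0 ν k n u
  have hIci : ∫ u in Set.Ici (0:ℝ), u ^ n * Real.exp (-(k * u))
      = (n.factorial : ℝ) / k ^ (n + 1) := by
    rw [integral_Ici_eq_integral_Ioi]
    have h1 : ∫ u in Set.Ioi (0:ℝ), u ^ n * Real.exp (-(k * u))
        = ∫ u in Set.Ioi (0:ℝ), u ^ ((n:ℝ)) * Real.exp (-k * u ^ (1:ℝ)) :=
      setIntegral_congr_fun measurableSet_Ioi fun u hu => by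
        rw [Real.rpow_natCast, Real.rpow_one, neg_mul]
    rw [h1, integral_rpow_mul_exp_neg_mul_rpow one_pos hn1 hk]
    simp only [div_one]
    rw [Real.Gamma_nat_eq_factorial n]
    have h2 : k ^ (-(((n:ℝ)) + 1)) = (k ^ (n + 1))⁻¹ := by
      rw [Real.rpow_neg hk.le]
      congr 1
      rw [← Real.rpow_natCast k (n + 1)]
      congr 1
      push_cast
      ring
    rw [h2]
    ring
  rw [gain_img hA0,
    integral_image_eq_integral_abs_deriv_smul measurableSet_Ici (gain_deriv A0) (gain_inj hA0)
      (gainTerm A0 ν k n), hcg, integral_const_mul, hIci, mul_pow, pow_succ]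
  have hn : (n.factorial : ℝ) ≠ 0 := Nat.cast_ne_zero.mpr n.factorial_ne_zero
  field_simp
  ring

/-- The channel-gain density integrates to one on `(0, A0]`:
`∫_0^{A0} f_h(t) dt = 1`. -/
theorem gain_density_integrates_to_one
    (A0 ω ℓ σ s : ℝ) (hA0 : 0 < A0) (hω : 0 < ω) (hℓ : 0 < ℓ) (hσ : 0 < σ)
    (hs : 0 ≤ s)
    (γ ν : ℝ) (hγ : γ = ω / (2 * ℓ * σ)) (hν : ν = s ^ 2 / (2 * ℓ ^ 2 * σ ^ 2))
    (I0 fh : ℝ → ℝ)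
    (hI0 : ∀ p, I0 p = ∑' n : ℕ, (p / 2) ^ (2 * n) / ((n.factorial : ℝ)) ^ 2)
    (hfh : ∀ t, 0 < t → t ≤ A0 → fh t =
      (γ ^ 2 / A0 ^ (γ ^ 2)) * Real.exp (-ν) * t ^ (γ ^ 2 - 1)
        * I0 ((s / (ℓ ^ 2 * σ ^ 2)) * Real.sqrt ((ω ^ 2 / 2) * Real.log (A0 / t)))) :
    (∫ t in (0 : ℝ)..A0, fh t) = 1 := by
  have hk0 : (0:ℝ) < γ ^ 2 := by rw [hγ]; positivity
  have hν0 : (0:ℝ) ≤ ν := by rw [hν]; positivity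
  have hpt : ∀ t ∈ Set.Ioc (0:ℝ) A0, fh t = ∑' n : ℕ, gainTerm A0 ν (γ ^ 2) n t := by
    rintro t ⟨ht0, htA⟩
    have hl : 0 ≤ Real.log (A0 / t) := Real.log_nonneg ((one_le_div ht0).mpr htA)
    have harg : 0 ≤ (ω ^ 2 / 2) * Real.log (A0 / t) := by positivity
    rw [hfh t ht0 htA, hI0, ← tsum_mul_left]
    refine tsum_congr fun n => ?_
    unfold gainTerm
    have hc : ((s / (ℓ ^ 2 * σ ^ 2)) * Real.sqrt ((ω ^ 2 / 2) * Real.log (A0 / t)) / 2) ^ 2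
        = ν * γ ^ 2 * Real.log (A0 / t) := by
      rw [div_pow, mul_pow, Real.sq_sqrt harg, hν, hγ]
      field_simp
    rw [pow_mul, hc]
  have hnorm : ∀ n : ℕ, (∫ t in Set.Ioc (0:ℝ) A0, ‖gainTerm A0 ν (γ ^ 2) n t‖)
      = Real.exp (-ν) * (ν ^ n / (n.factorial : ℝ)) := by
    intro n
    rw [setIntegral_congr_fun measurableSet_Ioc
        (fun t ht => Real.norm_of_nonneg (gain_nonneg hA0 hν0 hk0.le n t ht)),
      gain_integral hA0 hk0 n, mul_div_assoc]
  have hsum : Summable fun n : ℕ => ∫ t in Set.Ioc (0:ℝ) A0, ‖gainTerm A0 ν (γ ^ 2) n t‖ := by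
    refine Summable.congr ((Real.summable_pow_div_factorial ν).mul_left (Real.exp (-ν))) ?_
    intro n
    exact (hnorm n).symm
  rw [intervalIntegral.integral_of_le hA0.le]
  rw [setIntegral_congr_fun measurableSet_Ioc hpt]
  rw [show (∫ t in Set.Ioc (0:ℝ) A0, ∑' n : ℕ, gainTerm A0 ν (γ ^ 2) n t)
      = ∑' n : ℕ, ∫ t in Set.Ioc (0:ℝ) A0, gainTerm A0 ν (γ ^ 2) n t from
    (integral_tsum_of_summable_integral_norm (fun n => gain_integrableOn hA0 hk0 n) hsum).symm]
  have hval : ∀ n : ℕ, (∫ t in Set.Ioc (0:ℝ) A0, gainTerm A0 ν (γ ^ 2) n t)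
      = Real.exp (-ν) * (ν ^ n / (n.factorial : ℝ)) := fun n => by
    rw [gain_integral hA0 hk0 n, mul_div_assoc]
  rw [tsum_congr hval, tsum_mul_left]
  have hexp : ∑' n : ℕ, ν ^ n / (n.factorial : ℝ) = Real.exp ν := by
    rw [Real.exp_eq_exp_ℝ, NormedSpace.exp_eq_tsum_div]
  rw [hexp, ← Real.exp_add]
  simp
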